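/- Let Z be a measurable space, A an action space, K(dz'|z,a) a transition kernel, c : Z×A → [0,∞) measurable, and suppose (g*, h, f) satisfies the average cost optimality equation: g* + h(z) = inf_{a} [c(z,a) + ∫ h(z') K(dz'|z,a)] = c(z,f(z)) + ∫ h(z') K(dz'|z,f(z)) for all z, with g* a constant. If limsup_{T→∞} (1/T) E_z^Π[h(Z_T)] = 0 for every z and every admissible policy Π, then the stationary deterministic policy Π* = {f} is average-cost optimal: g* = J(z,Π*) = inf_Π J(z,Π) where J(z,Π) = limsup_T (1/T) E_z^Π[Σ_{t=0}^{T-1} c(Z_t,A_t)]. Moreover |J(z,Π*,T) − g*| ≤ (1/T)|E_z^{Π*}[h(Z_T)] − h(z)| for every T ≥ 1. -/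

import Mathlib

open MeasureTheory ProbabilityTheory Filter Topology ENNReal
set_option linter.unusedSectionVars false
set_option linter.unusedVariables false
set_option maxHeartbeats 1000000

/-- A state-action process `(Z_t, A_t)` on a probability space which is consistent with
the controlled transition kernel `K`: conditionally on the history up to time `t`, the
next state `Z_{t+1}` has law `K(· | Z_t, A_t)`.  This models the process induced by an
arbitrary admissible (possibly randomized, history-dependent) policy. -/
structure ControlledProcess (Z A : Type*) [MeasurableSpace Z] [MeasurableSpace A]
    (K : ProbabilityTheory.Kernel (Z × A) Z) where
  Ω : Type
  mΩ : MeasurableSpace Ω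
  μ : MeasureTheory.Measure Ω
  prob : MeasureTheory.IsProbabilityMeasure μ
  Zt : ℕ → Ω → Z
  At : ℕ → Ω → A
  measZ : ∀ t, Measurable (Zt t)
  measA : ∀ t, Measurable (At t)
  cond : ∀ (t : ℕ) (F : (Fin (t + 1) → Z × A) → ℝ) (g : Z → ℝ),
    Measurable F → Measurable g → (∃ C, ∀ h, |F h| ≤ C) → (∃ C, ∀ z, |g z| ≤ C) →
    (∫ ω, F (fun s => (Zt s ω, At s ω)) * g (Zt (t + 1) ω) ∂μ)
      = ∫ ω, F (fun s => (Zt s ω, At s ω)) * (∫ z', g z' ∂(K (Zt t ω, At t ω))) ∂μ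

/-- `T`-stage expected total cost of a controlled process (in `ℝ≥0∞`). -/
noncomputable def totalCost {Z A : Type*} [MeasurableSpace Z] [MeasurableSpace A]
    {K : ProbabilityTheory.Kernel (Z × A) Z} (c : Z × A → ℝ)
    (T : ControlledProcess Z A K) (n : ℕ) : ℝ≥0∞ :=
  ∑ t ∈ Finset.range n, ∫⁻ ω, ENNReal.ofReal (c (T.Zt t ω, T.At t ω)) ∂T.μ

/-- Infinite-horizon average cost `J = limsup_T (1/T) E[Σ_{t<T} c(Z_t,A_t)]`. -/
noncomputable def avgCost {Z A : Type*} [MeasurableSpace Z] [MeasurableSpace A]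
    {K : ProbabilityTheory.Kernel (Z × A) Z} (c : Z × A → ℝ)
    (T : ControlledProcess Z A K) : ℝ≥0∞ :=
  Filter.limsup (fun n : ℕ => totalCost c T n / (n : ℝ≥0∞)) Filter.atTop

section mix

variable {Ω : Type*} [MeasurableSpace Ω] (μ : Measure Ω) [IsProbabilityMeasure μ]

noncomputable def mixMeasure : Measure (ℕ × Ω) :=
  Measure.sum fun k => ((2 : ℝ≥0∞)⁻¹) ^ (k + 1) • (μ.map fun ω => (k, ω))

lemma mixMeasure_prob : IsProbabilityMeasure (mixMeasure μ) := by
  constructor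
  rw [mixMeasure, Measure.sum_apply _ MeasurableSet.univ]
  have : ∀ k : ℕ, (((2 : ℝ≥0∞)⁻¹) ^ (k + 1) • (μ.map fun ω => (k, ω))) Set.univ
      = ((2 : ℝ≥0∞)⁻¹) ^ (k + 1) := by
    intro k
    rw [Measure.smul_apply, Measure.map_apply measurable_prodMk_left MeasurableSet.univ]
    simp
  simp_rw [this]
  rw [ENNReal.tsum_geometric_add_one, ENNReal.one_sub_inv_two]
  simp [ENNReal.inv_mul_cancel]

lemma mixMeasure_lintegral (f : ℕ × Ω → ℝ≥0∞) (hf : Measurable f) :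
    ∫⁻ p, f p ∂(mixMeasure μ) = ∑' k, ((2 : ℝ≥0∞)⁻¹) ^ (k + 1) * ∫⁻ ω, f (k, ω) ∂μ := by
  rw [mixMeasure, lintegral_sum_measure]
  congr 1
  ext k
  rw [lintegral_smul_measure, lintegral_map hf measurable_prodMk_left, smul_eq_mul]

lemma mixMeasure_integral (f : ℕ × Ω → ℝ) (hf : Measurable f) {C : ℝ} (hC : ∀ p, |f p| ≤ C) :
    ∫ p, f p ∂(mixMeasure μ)
      = ∑' k, (((2 : ℝ≥0∞)⁻¹) ^ (k + 1)).toReal * ∫ ω, f (k, ω) ∂μ := by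
  haveI := mixMeasure_prob μ
  have hint : Integrable f (mixMeasure μ) :=
    (integrable_const C).mono' hf.aestronglyMeasurable
      (Filter.Eventually.of_forall (by simpa [Real.norm_eq_abs] using hC))
  rw [mixMeasure] at hint ⊢
  rw [integral_sum_measure hint]
  congr 1
  ext k
  rw [integral_smul_measure, integral_map measurable_prodMk_left.aemeasurable
    (hf.aestronglyMeasurable.mono_measure (le_refl _))]
  rw [smul_eq_mul]

lemma mix_shift_meas {Z : Type*} [MeasurableSpace Z] {Zt : ℕ → Ω → Z}
    (measZ : ∀ t, Measurable (Zt t)) (φ : ℕ → ℕ) (t : ℕ) :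
    Measurable fun p : ℕ × Ω => Zt (t + φ p.1) p.2 := by
  have : Measurable fun q : Ω × ℕ => Zt (t + φ q.2) q.1 :=
    measurable_from_prod_countable_left fun k => measZ (t + φ k)
  exact this.comp measurable_swap

end mix

section shiftmix

variable {Z A : Type*} [MeasurableSpace Z] [MeasurableSpace A]
variable {K : ProbabilityTheory.Kernel (Z × A) Z} [IsMarkovKernel K]

lemma kint_bdd {g : Z → ℝ} {C : ℝ} (hC : ∀ z, |g z| ≤ C) (p : Z × A) :
    |∫ z', g z' ∂(K p)| ≤ C := by
  have := norm_integral_le_of_norm_le_const (μ := K p) (f := g) (C := C)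
    (Filter.Eventually.of_forall (by simpa [Real.norm_eq_abs] using hC))
  simpa [Real.norm_eq_abs, measure_univ] using this

lemma meas_kint {g : Z → ℝ} (hg : Measurable g) :
    Measurable fun p : Z × A => ∫ z', g z' ∂(K p) := by
  have : StronglyMeasurable fun q : (Z × A) × Z => g q.2 :=
    (hg.comp measurable_snd).stronglyMeasurable
  exact this.integral_kernel_prod_right'.measurable

lemma cond_shift (T : ControlledProcess Z A K) (m t : ℕ) (F : (Fin (t + 1) → Z × A) → ℝ)
    (g : Z → ℝ) (hF : Measurable F) (hg : Measurable g)
    (hCF : ∃ C, ∀ x, |F x| ≤ C) (hCg : ∃ C, ∀ z, |g z| ≤ C) :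
    (∫ ω, F (fun s => (T.Zt (↑s + m) ω, T.At (↑s + m) ω)) * g (T.Zt (t + m + 1) ω) ∂T.μ)
      = ∫ ω, F (fun s => (T.Zt (↑s + m) ω, T.At (↑s + m) ω))
          * (∫ z', g z' ∂(K (T.Zt (t + m) ω, T.At (t + m) ω))) ∂T.μ := by
  obtain ⟨CF, hCF⟩ := hCF
  have hF' : Measurable fun H : Fin (t + m + 1) → Z × A =>
      F (fun s => H ⟨↑s + m, by omega⟩) :=
    hF.comp (measurable_pi_lambda _ fun s => measurable_pi_apply _)
  exact T.cond (t + m) (fun H => F (fun s => H ⟨↑s + m, by omega⟩)) g hF' hg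
    ⟨CF, fun H => hCF _⟩ hCg


/-- The mixture, over `k`, of the process `T` time-shifted by `φ k`, with geometric
weights `2^{-(k+1)}`. -/
noncomputable def shiftMix (T : ControlledProcess Z A K) (φ : ℕ → ℕ) :
    ControlledProcess Z A K := by
  letI := T.mΩ
  haveI := T.prob
  refine
  { Ω := ℕ × T.Ω
    mΩ := inferInstance
    μ := mixMeasure T.μ
    prob := mixMeasure_prob T.μ
    Zt := fun t p => T.Zt (t + φ p.1) p.2
    At := fun t p => T.At (t + φ p.1) p.2
    measZ := fun t => mix_shift_meas T.measZ φ t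
    measA := fun t => mix_shift_meas T.measA φ t
    cond := ?_ }
  intro t F g hF hg ⟨CF, hCF⟩ ⟨Cg, hCg⟩
  have hCF' : ∀ x, |F x| ≤ |CF| := fun x => le_trans (hCF x) (le_abs_self _)
  have hCg' : ∀ z, |g z| ≤ |Cg| := fun z => le_trans (hCg z) (le_abs_self _)
  have hgK : Measurable fun q : Z × A => ∫ z', g z' ∂(K q) := meas_kint hg
  have hhist : Measurable fun p : ℕ × T.Ω =>
      (fun s : Fin (t + 1) => (T.Zt (↑s + φ p.1) p.2, T.At (↑s + φ p.1) p.2)) :=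
    measurable_pi_lambda _ fun s =>
      ((mix_shift_meas T.measZ φ ↑s).prodMk (mix_shift_meas T.measA φ ↑s))
  have hm1 : Measurable fun p : ℕ × T.Ω =>
      F (fun s => (T.Zt (↑s + φ p.1) p.2, T.At (↑s + φ p.1) p.2))
        * g (T.Zt (t + 1 + φ p.1) p.2) :=
    (hF.comp hhist).mul (hg.comp (mix_shift_meas T.measZ φ (t + 1)))
  have hm2 : Measurable fun p : ℕ × T.Ω =>
      F (fun s => (T.Zt (↑s + φ p.1) p.2, T.At (↑s + φ p.1) p.2))
        * (∫ z', g z' ∂(K (T.Zt (t + φ p.1) p.2, T.At (t + φ p.1) p.2))) :=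
    (hF.comp hhist).mul
      (hgK.comp ((mix_shift_meas T.measZ φ t).prodMk (mix_shift_meas T.measA φ t)))
  have hb1 : ∀ p : ℕ × T.Ω,
      |F (fun s => (T.Zt (↑s + φ p.1) p.2, T.At (↑s + φ p.1) p.2))
        * g (T.Zt (t + 1 + φ p.1) p.2)| ≤ |CF| * |Cg| := by
    intro p
    rw [abs_mul]
    exact mul_le_mul (hCF' _) (hCg' _) (abs_nonneg _) (abs_nonneg _)
  have hb2 : ∀ p : ℕ × T.Ω,
      |F (fun s => (T.Zt (↑s + φ p.1) p.2, T.At (↑s + φ p.1) p.2))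
        * (∫ z', g z' ∂(K (T.Zt (t + φ p.1) p.2, T.At (t + φ p.1) p.2)))| ≤ |CF| * |Cg| := by
    intro p
    rw [abs_mul]
    exact mul_le_mul (hCF' _) (kint_bdd hCg' _) (abs_nonneg _) (abs_nonneg _)
  rw [mixMeasure_integral T.μ _ hm1 hb1, mixMeasure_integral T.μ _ hm2 hb2]
  refine tsum_congr fun k => ?_
  congr 1
  simp only [Prod.fst, Prod.snd]
  have e : t + 1 + φ k = t + φ k + 1 := by omega
  rw [e]
  exact cond_shift T (φ k) t F g hF hg ⟨CF, hCF⟩ ⟨Cg, hCg⟩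

end shiftmix

section main

variable {Z A : Type*} [MeasurableSpace Z] [MeasurableSpace A]
variable {K : ProbabilityTheory.Kernel (Z × A) Z} [IsMarkovKernel K]

lemma int_of_bdd {α : Type*} [MeasurableSpace α] {μ : Measure α} [IsFiniteMeasure μ]
    {f : α → ℝ} (hf : Measurable f) {C : ℝ} (hC : ∀ x, |f x| ≤ C) : Integrable f μ :=
  (integrable_const C).mono' hf.aestronglyMeasurable
    (Filter.Eventually.of_forall (by simpa [Real.norm_eq_abs] using hC))

/-- Under `hhintT`, the expected values `∫ |h(Z_n)|` along any process are uniformly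
bounded, via the geometric mixture of time-shifted processes. -/
lemma exists_bound (h : Z → ℝ) (hhmeas : Measurable h)
    (hhintT : ∀ T' : ControlledProcess Z A K, ∀ t : ℕ,
      Integrable (fun ω => h (T'.Zt t ω)) T'.μ)
    (T : ControlledProcess Z A K) :
    ∃ B : ℝ≥0∞, B ≠ ⊤ ∧ ∀ n : ℕ, ∫⁻ ω, ‖h (T.Zt n ω)‖₊ ∂T.μ ≤ B := by
  letI := T.mΩ
  haveI := T.prob
  by_contra hc
  push_neg at hc
  have hsel : ∀ k : ℕ, ∃ n : ℕ, (2 : ℝ≥0∞) ^ (k + 1) < ∫⁻ ω, ‖h (T.Zt n ω)‖₊ ∂T.μ := by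
    intro k
    obtain ⟨n, hn⟩ := hc ((2 : ℝ≥0∞) ^ (k + 1)) (by simp)
    exact ⟨n, hn⟩
  choose φ hφ using hsel
  have hint := (hhintT (shiftMix T φ) 0).2
  rw [hasFiniteIntegral_def] at hint
  have heq : (∫⁻ p, (‖h ((shiftMix T φ).Zt 0 p)‖₊ : ℝ≥0∞) ∂(shiftMix T φ).μ)
      = ∑' k, ((2 : ℝ≥0∞)⁻¹) ^ (k + 1) * ∫⁻ ω, (‖h (T.Zt (0 + φ k) ω)‖₊ : ℝ≥0∞) ∂T.μ :=
    mixMeasure_lintegral T.μ (fun p : ℕ × T.Ω => (‖h (T.Zt (0 + φ p.1) p.2)‖₊ : ℝ≥0∞))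
      ((hhmeas.comp (mix_shift_meas T.measZ φ 0)).nnnorm.coe_nnreal_ennreal)
  simp only [enorm_eq_nnnorm] at hint
  rw [heq] at hint
  have hterm : ∀ k : ℕ, (1 : ℝ≥0∞)
      ≤ ((2 : ℝ≥0∞)⁻¹) ^ (k + 1) * ∫⁻ ω, (‖h (T.Zt (0 + φ k) ω)‖₊ : ℝ≥0∞) ∂T.μ := by
    intro k
    have h1 : (1 : ℝ≥0∞) = ((2 : ℝ≥0∞)⁻¹) ^ (k + 1) * (2 : ℝ≥0∞) ^ (k + 1) := by
      rw [← mul_pow, ENNReal.inv_mul_cancel (by norm_num) (by norm_num), one_pow]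
    rw [h1, zero_add]
    exact mul_le_mul_right (le_of_lt (hφ k)) _
  have htop : (⊤ : ℝ≥0∞) ≤ ∑' k, ((2 : ℝ≥0∞)⁻¹) ^ (k + 1)
      * ∫⁻ ω, (‖h (T.Zt (0 + φ k) ω)‖₊ : ℝ≥0∞) ∂T.μ := by
    calc (⊤ : ℝ≥0∞) = ∑' _ : ℕ, (1 : ℝ≥0∞) :=
          (ENNReal.tsum_const_eq_top_of_ne_zero one_ne_zero).symm
      _ ≤ _ := ENNReal.tsum_le_tsum hterm
  rw [top_le_iff] at htop
  rw [htop] at hint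
  exact lt_irrefl _ hint

lemma exists_bound_real (h : Z → ℝ) (hhmeas : Measurable h)
    (hhintT : ∀ T' : ControlledProcess Z A K, ∀ t : ℕ,
      Integrable (fun ω => h (T'.Zt t ω)) T'.μ)
    (T : ControlledProcess Z A K) :
    ∃ B : ℝ, ∀ n : ℕ, |∫ ω, h (T.Zt n ω) ∂T.μ| ≤ B := by
  letI := T.mΩ
  obtain ⟨B, hBne, hB⟩ := exists_bound h hhmeas hhintT T
  refine ⟨B.toReal, fun n => ?_⟩
  have h1 : ‖∫ ω, h (T.Zt n ω) ∂T.μ‖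
      ≤ (∫⁻ ω, ENNReal.ofReal ‖h (T.Zt n ω)‖ ∂T.μ).toReal :=
    norm_integral_le_lintegral_norm _
  rw [Real.norm_eq_abs] at h1
  refine le_trans h1 (ENNReal.toReal_mono hBne ?_)
  simp_rw [ofReal_norm]
  exact hB n

end main

section steps

variable {Z A : Type*} [MeasurableSpace Z] [MeasurableSpace A]
variable {K : ProbabilityTheory.Kernel (Z × A) Z} [IsMarkovKernel K]

/-- Truncation of a real number to `[-M, M]`. -/
noncomputable def trunc (M : ℕ) (x : ℝ) : ℝ := max (-(M : ℝ)) (min x M)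

lemma trunc_abs_le_abs (M : ℕ) (x : ℝ) : |trunc M x| ≤ |x| := by
  rw [abs_le, trunc]
  constructor
  · exact le_max_of_le_right (le_min (neg_abs_le x) (le_trans (neg_nonpos_of_nonneg (abs_nonneg x)) (Nat.cast_nonneg M)))
  · exact max_le (le_trans (neg_nonpos_of_nonneg (Nat.cast_nonneg M)) (abs_nonneg x))
      (le_trans (min_le_left _ _) (le_abs_self x))

lemma trunc_abs_le (M : ℕ) (x : ℝ) : |trunc M x| ≤ (M : ℝ) := by
  rw [abs_le, trunc]
  refine ⟨le_max_left _ _, max_le (le_trans (neg_nonpos_of_nonneg (Nat.cast_nonneg M)) (Nat.cast_nonneg M)) (min_le_right _ _)⟩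

lemma trunc_tendsto (x : ℝ) : Tendsto (fun M : ℕ => trunc M x) atTop (𝓝 x) := by
  refine tendsto_atTop_of_eventually_const (i₀ := ⌈|x|⌉₊) fun M hM => ?_
  have hxM : |x| ≤ (M : ℝ) := le_trans (Nat.le_ceil _) (Nat.cast_le.2 hM)
  rw [trunc, min_eq_left (le_trans (le_abs_self x) hxM),
    max_eq_right (le_trans (neg_le_neg hxM) (neg_abs_le x))]

lemma trunc_meas (M : ℕ) : Measurable (trunc M) :=
  measurable_const.max (measurable_id.min measurable_const)

/-- One-step conditional expectation identity for bounded `g`. -/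
lemma step_bdd (T : ControlledProcess Z A K) (t : ℕ) {g : Z → ℝ} (hg : Measurable g)
    {C : ℝ} (hC : ∀ z', |g z'| ≤ C) :
    ∫ ω, g (T.Zt (t + 1) ω) ∂T.μ
      = ∫ ω, (∫ z', g z' ∂(K (T.Zt t ω, T.At t ω))) ∂T.μ := by
  have := T.cond t (fun _ => 1) g measurable_const hg ⟨1, fun _ => by simp⟩ ⟨C, hC⟩
  simpa using this

lemma int_phi (T : ControlledProcess Z A K) (t : ℕ) (h : Z → ℝ) (hhmeas : Measurable h)
    (hhint : ∀ z a, Integrable h (K (z, a)))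
    (hint1 : Integrable (fun ω => h (T.Zt (t + 1) ω)) T.μ) :
    Integrable (fun ω => ∫ z', |h z'| ∂(K (T.Zt t ω, T.At t ω))) T.μ := by
  letI := T.mΩ
  haveI := T.prob
  have hXm : Measurable fun ω => (T.Zt t ω, T.At t ω) := (T.measZ t).prodMk (T.measA t)
  have hphim : Measurable fun ω => ∫ z', |h z'| ∂(K (T.Zt t ω, T.At t ω)) :=
    (meas_kint hhmeas.abs).comp hXm
  have hfMm : ∀ M : ℕ, Measurable fun z => min |h z| (M : ℝ) := fun M =>
    hhmeas.abs.min measurable_const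
  have hfM0 : ∀ M : ℕ, ∀ z : Z, 0 ≤ min |h z| (M : ℝ) := fun M z =>
    le_min (abs_nonneg _) (Nat.cast_nonneg _)
  have hfMb : ∀ M : ℕ, ∀ z : Z, |min |h z| (M : ℝ)| ≤ (M : ℝ) := by
    intro M z
    rw [abs_of_nonneg (hfM0 M z)]
    exact min_le_right _ _
  have key : ∀ M : ℕ,
      (∫⁻ ω, ENNReal.ofReal (∫ z', min |h z'| (M : ℝ) ∂(K (T.Zt t ω, T.At t ω))) ∂T.μ)
        ≤ ENNReal.ofReal (∫ ω, |h (T.Zt (t + 1) ω)| ∂T.μ) := by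
    intro M
    have hint2 : Integrable (fun ω => ∫ z', min |h z'| (M : ℝ) ∂(K (T.Zt t ω, T.At t ω))) T.μ :=
      int_of_bdd ((meas_kint (hfMm M)).comp hXm) (fun ω => kint_bdd (hfMb M) _)
    rw [← ofReal_integral_eq_lintegral_ofReal hint2
      (Filter.Eventually.of_forall fun ω => integral_nonneg (hfM0 M))]
    apply ENNReal.ofReal_le_ofReal
    rw [← step_bdd T t (hfMm M) (hfMb M)]
    exact integral_mono (int_of_bdd ((hfMm M).comp (T.measZ (t + 1))) (fun ω => hfMb M _))
      hint1.abs (fun ω => min_le_left _ _)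
  have hptw : ∀ ω, Tendsto
      (fun M : ℕ => ENNReal.ofReal (∫ z', min |h z'| (M : ℝ) ∂(K (T.Zt t ω, T.At t ω)))) atTop
      (𝓝 (ENNReal.ofReal (∫ z', |h z'| ∂(K (T.Zt t ω, T.At t ω))))) := by
    intro ω
    apply ENNReal.tendsto_ofReal
    refine tendsto_integral_of_dominated_convergence (fun z => |h z|)
      (fun M => (hfMm M).aestronglyMeasurable) (hhint (T.Zt t ω) (T.At t ω)).abs
      (fun M => Filter.Eventually.of_forall fun z => ?_)
      (Filter.Eventually.of_forall fun z => ?_)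
    · rw [Real.norm_eq_abs, abs_of_nonneg (hfM0 M z)]
      exact min_le_left _ _
    · refine tendsto_atTop_of_eventually_const (i₀ := ⌈|h z|⌉₊) fun M hM => ?_
      exact min_eq_left (le_trans (Nat.le_ceil _) (Nat.cast_le.2 hM))
  have hlin : (∫⁻ ω, ENNReal.ofReal (∫ z', |h z'| ∂(K (T.Zt t ω, T.At t ω))) ∂T.μ)
      ≤ ENNReal.ofReal (∫ ω, |h (T.Zt (t + 1) ω)| ∂T.μ) := by
    have hFatou := lintegral_liminf_le (μ := T.μ) (u := atTop)
      (f := fun (M : ℕ) ω => ENNReal.ofReal (∫ z', min |h z'| (M : ℝ) ∂(K (T.Zt t ω, T.At t ω))))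
      (fun M => ((meas_kint (hfMm M)).comp hXm).ennreal_ofReal)
    have heq : (∫⁻ ω, ENNReal.ofReal (∫ z', |h z'| ∂(K (T.Zt t ω, T.At t ω))) ∂T.μ)
        = ∫⁻ ω, Filter.liminf
          (fun M : ℕ => ENNReal.ofReal (∫ z', min |h z'| (M : ℝ) ∂(K (T.Zt t ω, T.At t ω))))
          atTop ∂T.μ := by
      apply lintegral_congr
      intro ω
      exact ((hptw ω).liminf_eq).symm
    rw [heq]
    refine le_trans hFatou ?_
    refine le_trans (liminf_le_liminf (Filter.Eventually.of_forall key)) ?_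
    simp [Filter.liminf_const]
  refine ⟨hphim.aestronglyMeasurable, ?_⟩
  rw [hasFiniteIntegral_iff_ofReal (Filter.Eventually.of_forall fun ω =>
    integral_nonneg fun z => abs_nonneg _)]
  exact lt_of_le_of_lt hlin ENNReal.ofReal_lt_top

lemma int_psi (T : ControlledProcess Z A K) (t : ℕ) (h : Z → ℝ) (hhmeas : Measurable h)
    (hhint : ∀ z a, Integrable h (K (z, a)))
    (hint1 : Integrable (fun ω => h (T.Zt (t + 1) ω)) T.μ) :
    Integrable (fun ω => ∫ z', h z' ∂(K (T.Zt t ω, T.At t ω))) T.μ := by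
  letI := T.mΩ
  haveI := T.prob
  have hXm : Measurable fun ω => (T.Zt t ω, T.At t ω) := (T.measZ t).prodMk (T.measA t)
  refine (int_phi T t h hhmeas hhint hint1).mono'
    ((meas_kint hhmeas).comp hXm).aestronglyMeasurable
    (Filter.Eventually.of_forall fun ω => ?_)
  have := norm_integral_le_integral_norm (μ := K (T.Zt t ω, T.At t ω)) h
  simpa [Real.norm_eq_abs] using this

/-- One-step conditional expectation identity for the (integrable) function `h`. -/
lemma step_h (T : ControlledProcess Z A K) (t : ℕ) (h : Z → ℝ) (hhmeas : Measurable h)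
    (hhint : ∀ z a, Integrable h (K (z, a)))
    (hint1 : Integrable (fun ω => h (T.Zt (t + 1) ω)) T.μ) :
    ∫ ω, h (T.Zt (t + 1) ω) ∂T.μ
      = ∫ ω, (∫ z', h z' ∂(K (T.Zt t ω, T.At t ω))) ∂T.μ := by
  letI := T.mΩ
  haveI := T.prob
  have hXm : Measurable fun ω => (T.Zt t ω, T.At t ω) := (T.measZ t).prodMk (T.measA t)
  have hgMm : ∀ M : ℕ, Measurable fun z => trunc M (h z) := fun M => (trunc_meas M).comp hhmeas
  have hgMb : ∀ M : ℕ, ∀ z : Z, |trunc M (h z)| ≤ (M : ℝ) := fun M z => trunc_abs_le M _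
  -- LHS convergence
  have hL : Tendsto (fun M : ℕ => ∫ ω, trunc M (h (T.Zt (t + 1) ω)) ∂T.μ) atTop
      (𝓝 (∫ ω, h (T.Zt (t + 1) ω) ∂T.μ)) := by
    refine tendsto_integral_of_dominated_convergence (fun ω => |h (T.Zt (t + 1) ω)|)
      (fun M => ((hgMm M).comp (T.measZ (t + 1))).aestronglyMeasurable) hint1.abs
      (fun M => Filter.Eventually.of_forall fun ω => ?_)
      (Filter.Eventually.of_forall fun ω => trunc_tendsto _)
    rw [Real.norm_eq_abs]
    exact trunc_abs_le_abs M _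
  -- RHS convergence
  have hR : Tendsto (fun M : ℕ => ∫ ω, (∫ z', trunc M (h z') ∂(K (T.Zt t ω, T.At t ω))) ∂T.μ)
      atTop (𝓝 (∫ ω, (∫ z', h z' ∂(K (T.Zt t ω, T.At t ω))) ∂T.μ)) := by
    refine tendsto_integral_of_dominated_convergence
      (fun ω => ∫ z', |h z'| ∂(K (T.Zt t ω, T.At t ω)))
      (fun M => ((meas_kint (hgMm M)).comp hXm).aestronglyMeasurable)
      (int_phi T t h hhmeas hhint hint1)
      (fun M => Filter.Eventually.of_forall fun ω => ?_)
      (Filter.Eventually.of_forall fun ω => ?_)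
    · rw [Real.norm_eq_abs]
      refine (norm_integral_le_integral_norm
        (μ := K (T.Zt t ω, T.At t ω)) (fun z' => trunc M (h z'))).trans ?_
      simp_rw [Real.norm_eq_abs]
      exact integral_mono
        (int_of_bdd (hgMm M).abs (fun z => by rw [abs_abs]; exact trunc_abs_le M _))
        (hhint (T.Zt t ω) (T.At t ω)).abs (fun z => trunc_abs_le_abs M _)
    · refine tendsto_integral_of_dominated_convergence (fun z => |h z|)
        (fun M => (hgMm M).aestronglyMeasurable) (hhint (T.Zt t ω) (T.At t ω)).abs
        (fun M => Filter.Eventually.of_forall fun z => ?_)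
        (Filter.Eventually.of_forall fun z => trunc_tendsto _)
      rw [Real.norm_eq_abs]
      exact trunc_abs_le_abs M _
  have hEq : ∀ M : ℕ, (∫ ω, trunc M (h (T.Zt (t + 1) ω)) ∂T.μ)
      = ∫ ω, (∫ z', trunc M (h z') ∂(K (T.Zt t ω, T.At t ω))) ∂T.μ := fun M =>
    step_bdd T t (hgMm M) (hgMb M)
  exact tendsto_nhds_unique (hL.congr hEq) hR

end steps

/-- Verification theorem for the average cost optimality equation (ACOE): if
`(g*, h, f)` is a canonical triplet with constant `g*` and
`limsup_T (1/T) E_z^Π[h(Z_T)] = 0` for every initial state and every admissible policy,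
then the stationary deterministic policy `f` is average-cost optimal with optimal value
`g*`, and `|J(z,Π*,T) − g*| ≤ (1/T)|E[h(Z_T)] − h(z)|` for every `T ≥ 1`. -/
theorem stmt_16 {Z A : Type*} [MeasurableSpace Z] [MeasurableSpace A]
    (K : ProbabilityTheory.Kernel (Z × A) Z) [ProbabilityTheory.IsMarkovKernel K]
    (c : Z × A → ℝ) (hcmeas : Measurable c) (hcpos : ∀ p, 0 ≤ c p)
    (gstar : ℝ) (h : Z → ℝ) (hhmeas : Measurable h)
    (f : Z → A) (hfmeas : Measurable f)
    (hhint : ∀ z a, Integrable h (K (z, a)))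
    (hacoe_le : ∀ z a, gstar + h z ≤ c (z, a) + ∫ z', h z' ∂(K (z, a)))
    (hacoe_eq : ∀ z, gstar + h z = c (z, f z) + ∫ z', h z' ∂(K (z, f z)))
    (hhintT : ∀ T : ControlledProcess Z A K, ∀ t : ℕ,
      Integrable (fun ω => h (T.Zt t ω)) T.μ)
    (htrans : ∀ T : ControlledProcess Z A K,
      Filter.limsup (fun n : ℕ => ((n : ℝ))⁻¹ * ∫ ω, h (T.Zt n ω) ∂T.μ) Filter.atTop = 0)
    (z : Z) :
    (∀ T : ControlledProcess Z A K, (∀ ω, T.Zt 0 ω = z) →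
        ENNReal.ofReal gstar ≤ avgCost c T)
    ∧ (∀ T : ControlledProcess Z A K, (∀ ω, T.Zt 0 ω = z) →
        (∀ t ω, T.At t ω = f (T.Zt t ω)) →
        avgCost c T = ENNReal.ofReal gstar
        ∧ ∀ n : ℕ, 1 ≤ n →
          |(totalCost c T n).toReal / (n : ℝ) - gstar|
            ≤ ((n : ℝ))⁻¹ * |(∫ ω, h (T.Zt n ω) ∂T.μ) - h z|) := by
  classical
  constructor
  · -- Part 1: lower bound for every admissible policy
    intro T hz0
    letI := T.mΩ
    haveI := T.prob
    obtain ⟨B, hB⟩ := exists_bound_real h hhmeas hhintT T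
    by_cases hfin : ∀ t : ℕ, (∫⁻ ω, ENNReal.ofReal (c (T.Zt t ω, T.At t ω)) ∂T.μ) ≠ ⊤
    · have hXm : ∀ t : ℕ, Measurable fun ω => (T.Zt t ω, T.At t ω) := fun t =>
        (T.measZ t).prodMk (T.measA t)
      have hcm : ∀ t : ℕ, Measurable fun ω => c (T.Zt t ω, T.At t ω) := fun t =>
        hcmeas.comp (hXm t)
      have hcint : ∀ t : ℕ, Integrable (fun ω => c (T.Zt t ω, T.At t ω)) T.μ := fun t =>
        ⟨(hcm t).aestronglyMeasurable, by
          rw [hasFiniteIntegral_iff_ofReal (Filter.Eventually.of_forall fun ω => hcpos _)]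
          exact lt_top_iff_ne_top.mpr (hfin t)⟩
      have hE := hhintT T
      have hpsiI : ∀ t : ℕ, Integrable (fun ω => ∫ z', h z' ∂(K (T.Zt t ω, T.At t ω))) T.μ :=
        fun t => int_psi T t h hhmeas hhint (hE (t + 1))
      have hstep : ∀ t : ℕ, ∫ ω, h (T.Zt (t + 1) ω) ∂T.μ
          = ∫ ω, (∫ z', h z' ∂(K (T.Zt t ω, T.At t ω))) ∂T.μ :=
        fun t => step_h T t h hhmeas hhint (hE (t + 1))
      have hge : ∀ t : ℕ, gstar + (∫ ω, h (T.Zt t ω) ∂T.μ) - (∫ ω, h (T.Zt (t + 1) ω) ∂T.μ)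
          ≤ ∫ ω, c (T.Zt t ω, T.At t ω) ∂T.μ := by
        intro t
        rw [hstep t]
        have hle : (fun ω => gstar + h (T.Zt t ω) - (∫ z', h z' ∂(K (T.Zt t ω, T.At t ω))))
            ≤ fun ω => c (T.Zt t ω, T.At t ω) := by
          intro ω
          have := hacoe_le (T.Zt t ω) (T.At t ω)
          simp only
          linarith
        have h2 := integral_mono (((integrable_const gstar).add (hE t)).sub (hpsiI t))
          (hcint t) hle
        have hI1 : Integrable (fun ω => gstar + h (T.Zt t ω)) T.μ :=
          (integrable_const gstar).add (hE t)
        have h3 : ∫ ω, (gstar + h (T.Zt t ω) - ∫ z', h z' ∂(K (T.Zt t ω, T.At t ω))) ∂T.μ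
            = gstar + (∫ ω, h (T.Zt t ω) ∂T.μ)
              - ∫ ω, (∫ z', h z' ∂(K (T.Zt t ω, T.At t ω))) ∂T.μ := by
          rw [integral_sub hI1 (hpsiI t),
            integral_add (integrable_const gstar) (hE t), integral_const]
          simp [measure_univ]
        simp only [Pi.sub_apply, Pi.add_apply] at h2
        rw [h3] at h2
        exact h2
      set E : ℕ → ℝ := fun t => ∫ ω, h (T.Zt t ω) ∂T.μ with hEdef
      set S : ℕ → ℝ := fun n => ∑ t ∈ Finset.range n, ∫ ω, c (T.Zt t ω, T.At t ω) ∂T.μ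
        with hSdef
      have hE0 : E 0 = h z := by
        simp only [hEdef]
        simp only [hz0]
        simp [measure_univ]
      have htel : ∀ n : ℕ, (n : ℝ) * gstar + E 0 - E n ≤ S n := by
        intro n
        induction n with
        | zero => simp [hSdef]
        | succ n ih =>
          have hS : S (n + 1) = S n + ∫ ω, c (T.Zt n ω, T.At n ω) ∂T.μ := by
            rw [hSdef]
            exact Finset.sum_range_succ _ n
          have h1 := hge n
          rw [hS]
          push_cast
          linarith
      have hTC : ∀ n : ℕ, totalCost c T n = ENNReal.ofReal (S n) := by
        intro n
        rw [totalCost, hSdef,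
          ENNReal.ofReal_sum_of_nonneg (fun t _ => integral_nonneg fun ω => hcpos _)]
        refine Finset.sum_congr rfl fun t _ => ?_
        exact (ofReal_integral_eq_lintegral_ofReal (hcint t)
          (Filter.Eventually.of_forall fun ω => hcpos _)).symm
      set D : ℝ := |h z| + B with hDdef
      have hSn : ∀ n : ℕ, 1 ≤ n → gstar - D / n ≤ S n / n := by
        intro n hn
        have hnp : (0 : ℝ) < n := by exact_mod_cast hn
        have h1 : (n : ℝ) * gstar - D ≤ S n := by
          have h2 := htel n
          have hEb : |E n| ≤ B := hB n
          have h3 : -B ≤ E 0 - E n - (- |h z|) := by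
            rw [hE0]
            have := neg_abs_le (h z)
            have := (abs_le.mp hEb).2
            linarith
          rw [hDdef]
          linarith [(abs_le.mp hEb).2, neg_abs_le (h z), htel n]
        calc gstar - D / n = ((n : ℝ) * gstar - D) / n := by field_simp
          _ ≤ S n / n := by gcongr
      have hvten : Tendsto (fun n : ℕ => ENNReal.ofReal (gstar - D / n)) atTop
          (𝓝 (ENNReal.ofReal gstar)) := by
        apply ENNReal.tendsto_ofReal
        have := tendsto_const_div_atTop_nhds_zero_nat D
        simpa using tendsto_const_nhds.sub this
      rw [avgCost, ← hvten.limsup_eq]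
      refine limsup_le_limsup ?_
      filter_upwards [eventually_ge_atTop 1] with n hn
      have hnp : (0 : ℝ) < n := by exact_mod_cast hn
      rw [hTC n, show ((n : ℝ≥0∞)) = ENNReal.ofReal (n : ℝ) from (ENNReal.ofReal_natCast n).symm,
        ← ENNReal.ofReal_div_of_pos hnp]
      exact ENNReal.ofReal_le_ofReal (hSn n hn)
    · push_neg at hfin
      obtain ⟨t0, ht0⟩ := hfin
      have hev : ∀ᶠ n : ℕ in atTop,
          totalCost c T n / (n : ℝ≥0∞) = (⊤ : ℝ≥0∞) := by
        filter_upwards [eventually_ge_atTop (t0 + 1)] with n hn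
        have htop : totalCost c T n = ⊤ := by
          rw [totalCost, ENNReal.sum_eq_top]
          exact ⟨t0, Finset.mem_range.mpr (by omega), ht0⟩
        rw [htop, ENNReal.top_div_of_ne_top (ENNReal.natCast_ne_top n)]
      rw [avgCost, Filter.limsup_congr hev, Filter.limsup_const]
      exact le_top
  · -- Part 2: the stationary policy f
    intro T hz0 hstat
    letI := T.mΩ
    haveI := T.prob
    obtain ⟨B, hB⟩ := exists_bound_real h hhmeas hhintT T
    have hE := hhintT T
    have hpsiI : ∀ t : ℕ, Integrable (fun ω => ∫ z', h z' ∂(K (T.Zt t ω, T.At t ω))) T.μ :=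
      fun t => int_psi T t h hhmeas hhint (hE (t + 1))
    have hstep : ∀ t : ℕ, ∫ ω, h (T.Zt (t + 1) ω) ∂T.μ
        = ∫ ω, (∫ z', h z' ∂(K (T.Zt t ω, T.At t ω))) ∂T.μ :=
      fun t => step_h T t h hhmeas hhint (hE (t + 1))
    have hceq : ∀ t : ℕ, (fun ω => c (T.Zt t ω, T.At t ω))
        = fun ω => gstar + h (T.Zt t ω) - ∫ z', h z' ∂(K (T.Zt t ω, T.At t ω)) := by
      intro t
      funext ω
      have h1 := hacoe_eq (T.Zt t ω)
      rw [hstat t ω]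
      linarith
    have hI1 : ∀ t : ℕ, Integrable (fun ω => gstar + h (T.Zt t ω)) T.μ := fun t =>
      (integrable_const gstar).add (hE t)
    have hcint : ∀ t : ℕ, Integrable (fun ω => c (T.Zt t ω, T.At t ω)) T.μ := by
      intro t
      rw [hceq t]
      exact (hI1 t).sub (hpsiI t)
    have hgeq : ∀ t : ℕ, ∫ ω, c (T.Zt t ω, T.At t ω) ∂T.μ
        = gstar + (∫ ω, h (T.Zt t ω) ∂T.μ) - ∫ ω, h (T.Zt (t + 1) ω) ∂T.μ := by
      intro t
      rw [hceq t, integral_sub (hI1 t) (hpsiI t),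
        integral_add (integrable_const gstar) (hE t), integral_const, hstep t]
      simp [measure_univ]
    set E : ℕ → ℝ := fun t => ∫ ω, h (T.Zt t ω) ∂T.μ with hEdef
    set S : ℕ → ℝ := fun n => ∑ t ∈ Finset.range n, ∫ ω, c (T.Zt t ω, T.At t ω) ∂T.μ
      with hSdef
    have hE0 : E 0 = h z := by
      simp only [hEdef]
      simp only [hz0]
      simp [measure_univ]
    have htel : ∀ n : ℕ, S n = (n : ℝ) * gstar + h z - E n := by
      intro n
      induction n with
      | zero => simp [hSdef, hE0.symm]
      | succ n ih =>
        have hS : S (n + 1) = S n + ∫ ω, c (T.Zt n ω, T.At n ω) ∂T.μ := by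
          rw [hSdef]
          exact Finset.sum_range_succ _ n
        rw [hS, ih, hgeq n]
        push_cast
        ring
    have hTC : ∀ n : ℕ, totalCost c T n = ENNReal.ofReal (S n) := by
      intro n
      rw [totalCost, hSdef,
        ENNReal.ofReal_sum_of_nonneg (fun t _ => integral_nonneg fun ω => hcpos _)]
      refine Finset.sum_congr rfl fun t _ => ?_
      exact (ofReal_integral_eq_lintegral_ofReal (hcint t)
        (Filter.Eventually.of_forall fun ω => hcpos _)).symm
    have hS0 : ∀ n : ℕ, 0 ≤ S n := fun n =>
      Finset.sum_nonneg fun t _ => integral_nonneg fun ω => hcpos _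
    have hrten : Tendsto (fun n : ℕ => (h z - E n) / (n : ℝ)) atTop (𝓝 0) := by
      have hbnd : ∀ n : ℕ, ‖(h z - E n) / (n : ℝ)‖ ≤ (|h z| + B) / (n : ℝ) := by
        intro n
        rcases Nat.eq_zero_or_pos n with hn | hn
        · simp [hn]
        · have hnp : (0 : ℝ) < n := by exact_mod_cast hn
          rw [Real.norm_eq_abs, abs_div, Nat.abs_cast]
          gcongr
          calc |h z - E n| ≤ |h z| + |E n| := abs_sub _ _
            _ ≤ |h z| + B := by linarith [hB n]
      exact squeeze_zero_norm hbnd (tendsto_const_div_atTop_nhds_zero_nat _)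
    have hmain : Tendsto (fun n : ℕ => totalCost c T n / (n : ℝ≥0∞)) atTop
        (𝓝 (ENNReal.ofReal gstar)) := by
      have hr : Tendsto (fun n : ℕ => gstar + (h z - E n) / (n : ℝ)) atTop (𝓝 gstar) := by
        simpa using tendsto_const_nhds.add hrten
      refine (ENNReal.tendsto_ofReal hr).congr' ?_
      filter_upwards [eventually_ge_atTop 1] with n hn
      have hnp : (0 : ℝ) < n := by exact_mod_cast hn
      rw [hTC n, show ((n : ℝ≥0∞)) = ENNReal.ofReal (n : ℝ) from (ENNReal.ofReal_natCast n).symm,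
        ← ENNReal.ofReal_div_of_pos hnp]
      congr 1
      rw [htel n]
      field_simp
      ring
    refine ⟨by rw [avgCost]; exact hmain.limsup_eq, fun n hn => ?_⟩
    have hnp : (0 : ℝ) < n := by exact_mod_cast hn
    rw [hTC n, ENNReal.toReal_ofReal (hS0 n), htel n]
    have heq2 : ((n : ℝ) * gstar + h z - E n) / n - gstar = (h z - E n) / n := by
      field_simp
      ring
    rw [heq2, abs_div, Nat.abs_cast, abs_sub_comm, div_eq_inv_mul]
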